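/- Let R ∈ ℝ^{n×n} and P ∈ ℝ^{n×n} be symmetric with P positive definite and R positive semidefinite, and let κ > 0. Then R − (κ/2)·R P⁻¹ R is positive semidefinite if and only if P − (κ/2)·R is positive semidefinite. -/

import Mathlib

open scoped Matrix
open Matrix

lemma herm_smul' {n : ℕ} {M : Matrix (Fin n) (Fin n) ℝ} (c : ℝ)
    (hM : M.IsHermitian) : (c • M).IsHermitian := by
  unfold Matrix.IsHermitian at *
  rw [conjTranspose_smul, hM]
  simp

lemma psd_smul' {n : ℕ} {M : Matrix (Fin n) (Fin n) ℝ} {c : ℝ} (hc : 0 ≤ c)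
    (hM : M.PosSemidef) : (c • M).PosSemidef := by
  refine .of_dotProduct_mulVec_nonneg (herm_smul' c hM.1) fun x => ?_
  rw [smul_mulVec, dotProduct_smul]
  exact mul_nonneg hc (hM.dotProduct_mulVec_nonneg x)

lemma psd_smul_iff {n : ℕ} {M : Matrix (Fin n) (Fin n) ℝ} {c : ℝ} (hc : 0 < c) :
    (c • M).PosSemidef ↔ M.PosSemidef := by
  constructor
  · intro h
    have := psd_smul' (c := c⁻¹) (by positivity) h
    rwa [smul_smul, inv_mul_cancel₀ hc.ne', one_smul] at this
  · exact psd_smul' hc.le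

lemma block_psd_iff {n : ℕ} {R Q : Matrix (Fin n) (Fin n) ℝ} (hR : R.PosSemidef)
    (hQ : Q.IsHermitian) :
    (fromBlocks R R R Q).PosSemidef ↔ (Q - R).PosSemidef := by
  have hT : Rᵀ = R := by simpa using hR.1.eq
  have swap : ∀ u v : Fin n → ℝ, v ⬝ᵥ R *ᵥ u = u ⬝ᵥ R *ᵥ v := by
    intro u v
    rw [dotProduct_comm]
    nth_rewrite 1 [← hT]
    rw [mulVec_transpose, ← dotProduct_mulVec]
  constructor
  · intro h
    refine .of_dotProduct_mulVec_nonneg (hQ.sub hR.1) fun x => ?_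
    have := h.dotProduct_mulVec_nonneg (Sum.elim (-x) x)
    simp only [Function.star_sumElim, fromBlocks_mulVec, sumElim_dotProduct_sumElim,
      star_trivial, mulVec_neg, dotProduct_neg, neg_dotProduct, neg_neg, dotProduct_add, neg_add_cancel, dotProduct_zero,
      sub_mulVec, dotProduct_sub, Sum.elim_comp_inl, Sum.elim_comp_inr] at this ⊢
    linarith
  · intro h
    have herm : (fromBlocks R R R Q).IsHermitian := by
      rw [isHermitian_fromBlocks_iff]
      exact ⟨hR.1, hR.1.eq, hR.1.eq.symm ▸ rfl, hQ⟩
    refine .of_dotProduct_mulVec_nonneg herm fun x => ?_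
    have hx : x = Sum.elim (x ∘ Sum.inl) (x ∘ Sum.inr) := (Sum.elim_comp_inl_inr x).symm
    set u := x ∘ Sum.inl
    set v := x ∘ Sum.inr
    rw [hx]
    have h1 := hR.dotProduct_mulVec_nonneg (u + v)
    have h2 := h.dotProduct_mulVec_nonneg v
    simp only [Function.star_sumElim, fromBlocks_mulVec, sumElim_dotProduct_sumElim,
      star_trivial, mulVec_add, dotProduct_add, add_dotProduct, sub_mulVec,
      dotProduct_sub, Sum.elim_comp_inl, Sum.elim_comp_inr] at h1 h2 ⊢
    nlinarith [swap u v]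

theorem stmt_15 {n : ℕ} (R P : Matrix (Fin n) (Fin n) ℝ)
    (hR : R.PosSemidef) (hP : P.PosDef) (κ : ℝ) (hκ : 0 < κ) :
    (R - (κ / 2) • (R * P⁻¹ * R)).PosSemidef ↔ (P - (κ / 2) • R).PosSemidef := by
  have hc : (0:ℝ) < 2 / κ := by positivity
  set Q : Matrix (Fin n) (Fin n) ℝ := (2 / κ) • P with hQdef
  have hQ : Q.PosDef := by
    refine .of_dotProduct_mulVec_pos (herm_smul' _ hP.1) fun x hx => ?_
    rw [smul_mulVec, dotProduct_smul, smul_eq_mul]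
    exact mul_pos hc (hP.dotProduct_mulVec_pos hx)
  haveI : Invertible Q := hQ.isUnit.invertible
  have hQinv : Q⁻¹ = (κ / 2) • P⁻¹ := by
    haveI : Invertible (2/κ : ℝ) := invertibleOfNonzero hc.ne'
    rw [hQdef, Matrix.inv_smul _ _ (Matrix.isUnit_iff_isUnit_det P |>.mp hP.isUnit),
      invOf_eq_inv, inv_div]
  have key1 : (fromBlocks R R Rᴴ Q).PosSemidef ↔ (R - R * Q⁻¹ * Rᴴ).PosSemidef :=
    Matrix.PosDef.fromBlocks₂₂ R R hQ
  rw [hR.1.eq] at key1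
  have e1 : R - R * Q⁻¹ * R = R - (κ / 2) • (R * P⁻¹ * R) := by
    rw [hQinv, Matrix.mul_smul, Matrix.smul_mul]
  have e2 : P - (κ / 2) • R = (κ / 2) • (Q - R) := by
    rw [smul_sub, hQdef, smul_smul, show κ / 2 * (2 / κ) = 1 by field_simp, one_smul]
  rw [e1] at key1
  rw [e2, psd_smul_iff (by positivity)]
  rw [← key1, block_psd_iff hR hQ.1]
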